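/- Let X be an L²-continuous, square integrable, zero-mean process on [0,T] with covariance measure μ. Then for every t ∈ [0,T], the regularized energy E(C_ε(X,X,t)) = (1/ε)∫₀ᵗ E(X_{s+ε} − X_s)² ds converges as ε → 0 to μ(D_t), where D_t = {(s,s) : s ∈ [0,t]} is the diagonal of [0,t]². -/

import Mathlib

open Set MeasureTheory Filter
open scoped Topology

noncomputable section

open scoped ENNReal

private lemma aux_mem_iff {x y s ε : ℝ} :
    (x ∈ Ioc s (s + ε) ∧ y ∈ Ioc s (s + ε)) ↔ s ∈ Ico (x - ε) x ∩ Ico (y - ε) y := by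
  simp only [mem_Ioc, mem_Ico, mem_inter_iff]
  constructor
  · rintro ⟨⟨h1, h2⟩, h3, h4⟩; exact ⟨⟨by linarith, h1⟩, ⟨by linarith, h3⟩⟩
  · rintro ⟨⟨h1, h2⟩, h3, h4⟩; exact ⟨⟨h2, by linarith⟩, h4, by linarith⟩

private lemma measT (ε : ℝ) : MeasurableSet
    {z : ℝ × (ℝ × ℝ) | z.2.1 ∈ Ioc z.1 (z.1 + ε) ∧ z.2.2 ∈ Ioc z.1 (z.1 + ε)} := by
  simp only [mem_Ioc, setOf_and]
  have m1 : Measurable fun z : ℝ × (ℝ × ℝ) => z.1 := measurable_fst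
  have m2 : Measurable fun z : ℝ × (ℝ × ℝ) => z.2.1 := measurable_fst.comp measurable_snd
  have m3 : Measurable fun z : ℝ × (ℝ × ℝ) => z.2.2 := measurable_snd.comp measurable_snd
  exact ((measurableSet_lt m1 m2).inter (measurableSet_le m2 (m1.add_const ε))).inter
    ((measurableSet_lt m1 m3).inter (measurableSet_le m3 (m1.add_const ε)))

private lemma Q_preimage (s ε : ℝ) :
    Ioc s (s + ε) ×ˢ Ioc s (s + ε) = Prod.mk s ⁻¹'
      {z : ℝ × (ℝ × ℝ) | z.2.1 ∈ Ioc z.1 (z.1 + ε) ∧ z.2.2 ∈ Ioc z.1 (z.1 + ε)} := by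
  ext p; simp [Set.mem_prod]

private lemma meas_nu_Q (ν : Measure (ℝ × ℝ)) [SFinite ν] (ε : ℝ) :
    Measurable fun s : ℝ => ν (Ioc s (s + ε) ×ˢ Ioc s (s + ε)) := by
  have h := measurable_measure_prodMk_left (ν := ν) (measT ε)
  have heq : (fun s : ℝ => ν (Ioc s (s + ε) ×ˢ Ioc s (s + ε))) = fun s => ν (Prod.mk s ⁻¹'
      {z : ℝ × (ℝ × ℝ) | z.2.1 ∈ Ioc z.1 (z.1 + ε) ∧ z.2.2 ∈ Ioc z.1 (z.1 + ε)}) :=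
    funext fun s => by rw [Q_preimage]
  rw [heq]; exact h

private lemma measT2 (t ε : ℝ) : MeasurableSet
    {z : (ℝ × ℝ) × ℝ | z.2 ∈ (Ico (z.1.1 - ε) z.1.1 ∩ Ico (z.1.2 - ε) z.1.2) ∩ Ioc 0 t} := by
  simp only [mem_inter_iff, mem_Ico, mem_Ioc, setOf_and]
  have m1 : Measurable fun z : (ℝ × ℝ) × ℝ => z.1.1 := measurable_fst.comp measurable_fst
  have m2 : Measurable fun z : (ℝ × ℝ) × ℝ => z.1.2 := measurable_snd.comp measurable_fst
  have m3 : Measurable fun z : (ℝ × ℝ) × ℝ => z.2 := measurable_snd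
  exact (((measurableSet_le (m1.add_const (-ε)) m3).congr (by ext z; simp [sub_eq_add_neg])
      |>.inter (measurableSet_lt m3 m1)).inter
    ((measurableSet_le (m2.add_const (-ε)) m3).congr (by ext z; simp [sub_eq_add_neg])
      |>.inter (measurableSet_lt m3 m2))).inter
    ((measurableSet_lt measurable_const m3).inter (measurableSet_le m3 measurable_const))

private lemma S_preimage (t ε : ℝ) (p : ℝ × ℝ) :
    (Ico (p.1 - ε) p.1 ∩ Ico (p.2 - ε) p.2) ∩ Ioc 0 t = Prod.mk p ⁻¹'
      {z : (ℝ × ℝ) × ℝ | z.2 ∈ (Ico (z.1.1 - ε) z.1.1 ∩ Ico (z.1.2 - ε) z.1.2) ∩ Ioc 0 t} := by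
  ext s; simp

private lemma meas_vol_S (t ε : ℝ) :
    Measurable fun p : ℝ × ℝ => volume ((Ico (p.1 - ε) p.1 ∩ Ico (p.2 - ε) p.2) ∩ Ioc 0 t) := by
  have h := measurable_measure_prodMk_left (ν := (volume : Measure ℝ)) (measT2 t ε)
  have heq : (fun p : ℝ × ℝ => volume ((Ico (p.1 - ε) p.1 ∩ Ico (p.2 - ε) p.2) ∩ Ioc 0 t))
      = fun p => volume (Prod.mk p ⁻¹'
      {z : (ℝ × ℝ) × ℝ | z.2 ∈ (Ico (z.1.1 - ε) z.1.1 ∩ Ico (z.1.2 - ε) z.1.2) ∩ Ioc 0 t}) :=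
    funext fun p => by rw [S_preimage]
  rw [heq]; exact h


private lemma key_swap (ν : Measure (ℝ × ℝ)) [IsFiniteMeasure ν] (t : ℝ) {ε : ℝ} (hε : 0 < ε) :
    ∫⁻ s in Ioc (0:ℝ) t, ν (Ioc s (s + ε) ×ˢ Ioc s (s + ε))
      = ∫⁻ p, volume ((Ico (p.1 - ε) p.1 ∩ Ico (p.2 - ε) p.2) ∩ Ioc 0 t) ∂ν := by
  set T : Set (ℝ × (ℝ × ℝ)) :=
    {z | z.2.1 ∈ Ioc z.1 (z.1 + ε) ∧ z.2.2 ∈ Ioc z.1 (z.1 + ε)} with hT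
  have hTm : MeasurableSet T := measT ε
  set f : ℝ → (ℝ × ℝ) → ℝ≥0∞ := fun s p => T.indicator 1 (s, p) with hf
  have h1 : ∀ s : ℝ, ν (Ioc s (s + ε) ×ˢ Ioc s (s + ε)) = ∫⁻ p, f s p ∂ν := by
    intro s
    have hset : {p : ℝ × ℝ | (s, p) ∈ T} = Ioc s (s + ε) ×ˢ Ioc s (s + ε) := by
      ext p; simp [hT, Set.mem_prod]
    have : f s = (Ioc s (s + ε) ×ˢ Ioc s (s + ε)).indicator 1 := by
      funext p
      rw [← hset]
      simp only [hf, indicator_apply, mem_setOf_eq, Pi.one_apply]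
    rw [this, lintegral_indicator_one (measurableSet_Ioc.prod measurableSet_Ioc)]
  have h2 : ∫⁻ s in Ioc (0:ℝ) t, (∫⁻ p, f s p ∂ν)
      = ∫⁻ p, (∫⁻ s in Ioc (0:ℝ) t, f s p) ∂ν := by
    refine lintegral_lintegral_swap ?_
    have : Function.uncurry f = T.indicator 1 := by
      funext z
      simp only [hf, Function.uncurry, indicator_apply]
    rw [this]
    exact (measurable_one.indicator hTm).aemeasurable
  have h3 : ∀ p : ℝ × ℝ, (∫⁻ s in Ioc (0:ℝ) t, f s p)
      = volume ((Ico (p.1 - ε) p.1 ∩ Ico (p.2 - ε) p.2) ∩ Ioc 0 t) := by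
    intro p
    have hset : {s : ℝ | (s, p) ∈ T} = Ico (p.1 - ε) p.1 ∩ Ico (p.2 - ε) p.2 := by
      ext s
      simp only [hT, mem_setOf_eq]
      exact aux_mem_iff
    have : (fun s => f s p) = (Ico (p.1 - ε) p.1 ∩ Ico (p.2 - ε) p.2).indicator 1 := by
      funext s
      rw [← hset]
      simp only [hf, indicator_apply, mem_setOf_eq, Pi.one_apply]
    rw [this, lintegral_indicator_one (measurableSet_Ico.inter measurableSet_Ico),
      Measure.restrict_apply (measurableSet_Ico.inter measurableSet_Ico)]
  calc ∫⁻ s in Ioc (0:ℝ) t, ν (Ioc s (s + ε) ×ˢ Ioc s (s + ε))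
      = ∫⁻ s in Ioc (0:ℝ) t, (∫⁻ p, f s p ∂ν) := lintegral_congr h1
    _ = ∫⁻ p, (∫⁻ s in Ioc (0:ℝ) t, f s p) ∂ν := h2
    _ = _ := lintegral_congr h3

private lemma vol_S_le (t ε : ℝ) (hε : 0 ≤ ε) (p : ℝ × ℝ) :
    volume ((Ico (p.1 - ε) p.1 ∩ Ico (p.2 - ε) p.2) ∩ Ioc 0 t) ≤ ENNReal.ofReal ε := by
  calc volume ((Ico (p.1 - ε) p.1 ∩ Ico (p.2 - ε) p.2) ∩ Ioc 0 t)
      ≤ volume (Ico (p.1 - ε) p.1) :=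
        measure_mono (inter_subset_left.trans inter_subset_left)
    _ = ENNReal.ofReal ε := by rw [Real.volume_Ico]; ring_nf

private lemma key_tendsto (ν : Measure (ℝ × ℝ)) [IsFiniteMeasure ν] (t : ℝ) :
    Tendsto (fun ε : ℝ => (1 / ε) * ∫ s in Ioc (0:ℝ) t, (ν (Ioc s (s + ε) ×ˢ Ioc s (s + ε))).toReal)
      (𝓝[>] 0) (𝓝 ((ν {p : ℝ × ℝ | p.1 = p.2 ∧ p.1 ∈ Ioc 0 t}).toReal)) := by
  set D : Set (ℝ × ℝ) := {p | p.1 = p.2 ∧ p.1 ∈ Ioc 0 t} with hD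
  have hDm : MeasurableSet D := by
    have : D = {p : ℝ × ℝ | p.1 = p.2} ∩ (Prod.fst ⁻¹' Ioc 0 t) := by
      ext p; simp [hD]
    rw [this]
    exact (measurableSet_eq_fun measurable_fst measurable_snd).inter
      (measurable_fst measurableSet_Ioc)
  set h : ℝ → (ℝ × ℝ) → ℝ :=
    fun ε p => (1 / ε) * (volume ((Ico (p.1 - ε) p.1 ∩ Ico (p.2 - ε) p.2) ∩ Ioc 0 t)).toReal
    with hh
  -- Step 1 : identification for ε > 0
  have hstep1 : ∀ ε : ℝ, 0 < ε →
      (1 / ε) * ∫ s in Ioc (0:ℝ) t, (ν (Ioc s (s + ε) ×ˢ Ioc s (s + ε))).toReal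
        = ∫ p, h ε p ∂ν := by
    intro ε hε
    have hL : ∫ s in Ioc (0:ℝ) t, (ν (Ioc s (s + ε) ×ˢ Ioc s (s + ε))).toReal
        = (∫⁻ s in Ioc (0:ℝ) t, ν (Ioc s (s + ε) ×ˢ Ioc s (s + ε))).toReal := by
      refine integral_toReal ((meas_nu_Q ν ε).aemeasurable) ?_
      exact Filter.Eventually.of_forall fun s => measure_lt_top ν _
    have hR : ∫ p, (volume ((Ico (p.1 - ε) p.1 ∩ Ico (p.2 - ε) p.2) ∩ Ioc 0 t)).toReal ∂ν
        = (∫⁻ p, volume ((Ico (p.1 - ε) p.1 ∩ Ico (p.2 - ε) p.2) ∩ Ioc 0 t) ∂ν).toReal := by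
      refine integral_toReal ((meas_vol_S t ε).aemeasurable) ?_
      refine Filter.Eventually.of_forall fun p => ?_
      exact lt_of_le_of_lt (vol_S_le t ε hε.le p) ENNReal.ofReal_lt_top
    calc (1 / ε) * ∫ s in Ioc (0:ℝ) t, (ν (Ioc s (s + ε) ×ˢ Ioc s (s + ε))).toReal
        = (1 / ε) * (∫⁻ s in Ioc (0:ℝ) t, ν (Ioc s (s + ε) ×ˢ Ioc s (s + ε))).toReal := by
          rw [hL]
      _ = (1 / ε) * (∫⁻ p, volume ((Ico (p.1 - ε) p.1 ∩ Ico (p.2 - ε) p.2) ∩ Ioc 0 t) ∂ν).toReal := by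
          rw [key_swap ν t hε]
      _ = (1 / ε) * ∫ p, (volume ((Ico (p.1 - ε) p.1 ∩ Ico (p.2 - ε) p.2) ∩ Ioc 0 t)).toReal ∂ν := by
          rw [hR]
      _ = ∫ p, h ε p ∂ν := by rw [← integral_const_mul]
  -- Step 2 : dominated convergence
  have hmain : Tendsto (fun ε : ℝ => ∫ p, h ε p ∂ν) (𝓝[>] 0)
      (𝓝 (∫ p, D.indicator (fun _ => (1:ℝ)) p ∂ν)) := by
    refine tendsto_integral_filter_of_dominated_convergence (fun _ => (1:ℝ)) ?_ ?_
      (integrable_const 1) ?_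
    · refine Filter.Eventually.of_forall fun ε => ?_
      exact (((meas_vol_S t ε).ennreal_toReal).const_mul (1 / ε)).aestronglyMeasurable
    · filter_upwards [self_mem_nhdsWithin] with ε (hε : 0 < ε)
      refine Filter.Eventually.of_forall fun p => ?_
      have h0 : 0 ≤ h ε p := by
        apply mul_nonneg (by positivity) ENNReal.toReal_nonneg
      rw [Real.norm_eq_abs, abs_of_nonneg h0]
      have hle : (volume ((Ico (p.1 - ε) p.1 ∩ Ico (p.2 - ε) p.2) ∩ Ioc 0 t)).toReal ≤ ε :=
        ENNReal.toReal_le_of_le_ofReal hε.le (vol_S_le t ε hε.le p)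
      show (1 / ε) * (volume ((Ico (p.1 - ε) p.1 ∩ Ico (p.2 - ε) p.2) ∩ Ioc 0 t)).toReal ≤ 1
      rw [one_div, inv_mul_le_iff₀ hε, mul_one]
      exact hle
    · refine Filter.Eventually.of_forall fun p => ?_
      obtain ⟨x, y⟩ := p
      by_cases hxy : x = y
      · subst hxy
        by_cases hx : 0 < x ∧ x ≤ t
        · -- limit is 1
          have hmem : ((x, x) : ℝ × ℝ) ∈ D := ⟨rfl, hx.1, hx.2⟩
          rw [indicator_of_mem hmem]
          refine Tendsto.congr' ?_ tendsto_const_nhds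
          filter_upwards [Ioo_mem_nhdsGT_of_mem (⟨le_refl 0, hx.1⟩ : (0:ℝ) ∈ Ico 0 x)]
            with ε hε
          obtain ⟨hε0, hεx⟩ := hε
          have hset : ((Ico (x - ε) x ∩ Ico (x - ε) x) ∩ Ioc 0 t) = Ico (x - ε) x := by
            rw [inter_self]
            refine inter_eq_left.mpr fun s hs => ?_
            obtain ⟨hs1, hs2⟩ := hs
            exact ⟨by linarith, by linarith [hx.2]⟩
          symm
          show (1 / ε) * (volume ((Ico (x - ε) x ∩ Ico (x - ε) x) ∩ Ioc 0 t)).toReal = 1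
          rw [hset, Real.volume_Ico, show x - (x - ε) = ε by ring,
            ENNReal.toReal_ofReal hε0.le, one_div, inv_mul_cancel₀ hε0.ne']
        · -- limit is 0
          have hmem : ((x, x) : ℝ × ℝ) ∉ D := by
            simp only [hD, mem_setOf_eq, mem_Ioc, not_and, true_and]
            intro h1 h2; exact hx ⟨h1, h2⟩
          rw [indicator_of_notMem hmem]
          refine Tendsto.congr' ?_ tendsto_const_nhds
          rcases not_and_or.mp hx with hx0 | hxt
          · -- x ≤ 0
            have hx0 : x ≤ 0 := le_of_not_gt hx0
            filter_upwards [self_mem_nhdsWithin] with ε (hε : 0 < ε)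
            have hset : ((Ico (x - ε) x ∩ Ico (x - ε) x) ∩ Ioc 0 t) = ∅ := by
              rw [inter_self, eq_empty_iff_forall_notMem]
              rintro s ⟨⟨hs1, hs2⟩, hs3, hs4⟩
              linarith
            symm
            show (1 / ε) * (volume ((Ico (x - ε) x ∩ Ico (x - ε) x) ∩ Ioc 0 t)).toReal = 0
            rw [hset]
            simp
          · -- t < x
            have hxt : t < x := lt_of_not_ge hxt
            filter_upwards [Ioo_mem_nhdsGT_of_mem
              (⟨le_refl 0, by linarith⟩ : (0:ℝ) ∈ Ico 0 (x - t))]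
              with ε hε
            obtain ⟨hε0, hεxt⟩ := hε
            have hset : ((Ico (x - ε) x ∩ Ico (x - ε) x) ∩ Ioc 0 t) = ∅ := by
              rw [inter_self, eq_empty_iff_forall_notMem]
              rintro s ⟨⟨hs1, hs2⟩, hs3, hs4⟩
              linarith
            symm
            show (1 / ε) * (volume ((Ico (x - ε) x ∩ Ico (x - ε) x) ∩ Ioc 0 t)).toReal = 0
            rw [hset]
            simp
      · -- off diagonal
        have hmem : ((x, y) : ℝ × ℝ) ∉ D := by
          simp only [hD, mem_setOf_eq]
          exact fun h => hxy h.1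
        rw [indicator_of_notMem hmem]
        refine Tendsto.congr' ?_ tendsto_const_nhds
        have habs : 0 < |x - y| := abs_pos.mpr (sub_ne_zero.mpr hxy)
        filter_upwards [Ioo_mem_nhdsGT_of_mem (⟨le_refl 0, habs⟩ : (0:ℝ) ∈ Ico 0 |x - y|)]
          with ε hε
        obtain ⟨hε0, hεd⟩ := hε
        have hset : ((Ico (x - ε) x ∩ Ico (y - ε) y) ∩ Ioc 0 t) = ∅ := by
          rw [eq_empty_iff_forall_notMem]
          rintro s ⟨⟨⟨hs1, hs2⟩, hs3, hs4⟩, _⟩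
          have : |x - y| < ε := abs_sub_lt_iff.mpr ⟨by linarith, by linarith⟩
          linarith
        symm
        show (1 / ε) * (volume ((Ico (x - ε) x ∩ Ico (y - ε) y) ∩ Ioc 0 t)).toReal = 0
        rw [hset]
        simp
  have hind : ∫ p, D.indicator (fun _ => (1:ℝ)) p ∂ν = (ν D).toReal := by
    rw [integral_indicator_const (1:ℝ) hDm]; simp; rfl
  rw [hind] at hmain
  refine hmain.congr' ?_
  filter_upwards [self_mem_nhdsWithin] with ε (hε : 0 < ε)
  exact (hstep1 ε hε).symm

private lemma integrable_nu_Q (ν : Measure (ℝ × ℝ)) [IsFiniteMeasure ν] (t ε : ℝ) :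
    Integrable (fun s => (ν (Ioc s (s + ε) ×ˢ Ioc s (s + ε))).toReal)
      (volume.restrict (Ioc (0:ℝ) t)) := by
  haveI : IsFiniteMeasure (volume.restrict (Ioc (0:ℝ) t)) :=
    ⟨by rw [Measure.restrict_apply_univ]; exact measure_Ioc_lt_top⟩
  refine Integrable.mono' (integrable_const ((ν univ).toReal)) ?_ ?_
  · exact ((meas_nu_Q ν ε).ennreal_toReal).aestronglyMeasurable
  · refine Filter.Eventually.of_forall fun s => ?_
    rw [Real.norm_eq_abs, abs_of_nonneg ENNReal.toReal_nonneg]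
    exact ENNReal.toReal_mono (measure_ne_top ν _) (measure_mono (subset_univ _))

theorem stmt_3 {Ω : Type*} [MeasureSpace Ω] [IsProbabilityMeasure (volume : Measure Ω)]
    (T : ℝ) (hT : 0 < T) (X : ℝ → Ω → ℝ)
    (hmeas : ∀ t : ℝ, Measurable (X t))
    (hint : ∀ s t : ℝ, Integrable (fun ω => X s ω * X t ω))
    (hmean : ∀ t : ℝ, ∫ ω, X t ω = 0)
    (hL2cont : ∀ t : ℝ, Tendsto (fun s => ∫ ω, (X s ω - X t ω) ^ 2) (𝓝 t) (𝓝 0))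
    (μ : SignedMeasure (ℝ × ℝ))
    (hμ : ∀ a₁ b₁ a₂ b₂ : ℝ, a₁ ≤ b₁ → a₂ ≤ b₂ →
      μ (Ioc a₁ b₁ ×ˢ Ioc a₂ b₂) =
        (∫ ω, X b₁ ω * X b₂ ω) + (∫ ω, X a₁ ω * X a₂ ω)
          - (∫ ω, X a₁ ω * X b₂ ω) - (∫ ω, X b₁ ω * X a₂ ω))
    (t : ℝ) (ht : t ∈ Icc 0 T) :
    Tendsto (fun ε : ℝ => (1 / ε) * ∫ s in Ioc (0 : ℝ) t, ∫ ω, (X (s + ε) ω - X s ω) ^ 2)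
      (𝓝[>] 0) (𝓝 (μ {p : ℝ × ℝ | p.1 = p.2 ∧ p.1 ∈ Icc 0 t})) := by
  obtain ⟨ht0, htT⟩ := ht
  set νp := μ.toJordanDecomposition.posPart with hνp
  set νn := μ.toJordanDecomposition.negPart with hνn
  have hdecomp : ∀ A : Set (ℝ × ℝ), MeasurableSet A →
      μ A = (νp A).toReal - (νn A).toReal := by
    intro A hA
    conv_lhs => rw [← MeasureTheory.SignedMeasure.toSignedMeasure_toJordanDecomposition μ]
    rw [JordanDecomposition.toSignedMeasure, VectorMeasure.coe_sub, Pi.sub_apply,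
      Measure.toSignedMeasure_apply_measurable hA, Measure.toSignedMeasure_apply_measurable hA]
    rfl
  -- the basic square identity
  have hsq : ∀ a b : ℝ, a ≤ b → μ (Ioc a b ×ˢ Ioc a b) = ∫ ω, (X b ω - X a ω) ^ 2 := by
    intro a b hab
    rw [hμ a b a b hab hab]
    have h1 : ∀ ω, (X b ω - X a ω) ^ 2
        = X b ω * X b ω - X b ω * X a ω - (X a ω * X b ω - X a ω * X a ω) := by
      intro ω; ring
    calc (∫ ω, X b ω * X b ω) + (∫ ω, X a ω * X a ω)
          - (∫ ω, X a ω * X b ω) - (∫ ω, X b ω * X a ω)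
        = ∫ ω, X b ω * X b ω - X b ω * X a ω - (X a ω * X b ω - X a ω * X a ω) := by
          have i1 : Integrable (fun ω => X b ω * X b ω - X b ω * X a ω) :=
            (hint b b).sub (hint b a)
          have i2 : Integrable (fun ω => X a ω * X b ω - X a ω * X a ω) :=
            (hint a b).sub (hint a a)
          rw [integral_sub i1 i2, integral_sub (hint b b) (hint b a),
            integral_sub (hint a b) (hint a a)]
          ring
      _ = ∫ ω, (X b ω - X a ω) ^ 2 := by
          exact integral_congr_ae (Filter.Eventually.of_forall fun ω => (h1 ω).symm)
  -- point mass at the origin vanishes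
  have hpt : μ {((0:ℝ), (0:ℝ))} = 0 := by
    set B : ℕ → Set (ℝ × ℝ) := fun n =>
      Ioc (-(1 / (n + 1 : ℝ))) 0 ×ˢ Ioc (-(1 / (n + 1 : ℝ))) 0 with hB
    have hBm : ∀ n, MeasurableSet (B n) := fun n => measurableSet_Ioc.prod measurableSet_Ioc
    have hBanti : Antitone B := by
      intro m n hmn
      have h1 : (1 : ℝ) / (n + 1) ≤ 1 / (m + 1) := by
        apply one_div_le_one_div_of_le (by positivity)
        linarith [(Nat.cast_le (α := ℝ)).mpr hmn]
      exact Set.prod_mono (Ioc_subset_Ioc (by linarith) le_rfl)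
        (Ioc_subset_Ioc (by linarith) le_rfl)
    have hBint : ⋂ n, B n = {((0:ℝ), (0:ℝ))} := by
      ext ⟨x, y⟩
      simp only [hB, mem_iInter, Set.mem_prod, mem_Ioc, mem_singleton_iff, Prod.mk.injEq]
      constructor
      · intro hx
        have hx0 : x ≤ 0 := (hx 0).1.2
        have hy0 : y ≤ 0 := (hx 0).2.2
        constructor
        · by_contra hne
          have hxneg : x < 0 := lt_of_le_of_ne hx0 hne
          obtain ⟨n, hn⟩ := exists_nat_one_div_lt (show (0:ℝ) < -x by linarith)
          have := (hx n).1.1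
          linarith
        · by_contra hne
          have hyneg : y < 0 := lt_of_le_of_ne hy0 hne
          obtain ⟨n, hn⟩ := exists_nat_one_div_lt (show (0:ℝ) < -y by linarith)
          have := (hx n).2.1
          linarith
      · rintro ⟨rfl, rfl⟩
        intro n
        have : (0:ℝ) < 1 / (n + 1) := by positivity
        exact ⟨⟨by linarith, le_rfl⟩, ⟨by linarith, le_rfl⟩⟩
    have hptm : MeasurableSet ({((0:ℝ), (0:ℝ))} : Set (ℝ × ℝ)) := measurableSet_singleton _
    have htendp : Tendsto (fun n => (νp (B n)).toReal) atTop (𝓝 ((νp {((0:ℝ), (0:ℝ))}).toReal)) := by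
      have := MeasureTheory.tendsto_measure_iInter_atTop (μ := νp)
        (fun n => (hBm n).nullMeasurableSet) hBanti ⟨0, measure_ne_top _ _⟩
      rw [hBint] at this
      exact (ENNReal.tendsto_toReal (measure_ne_top _ _)).comp this
    have htendn : Tendsto (fun n => (νn (B n)).toReal) atTop (𝓝 ((νn {((0:ℝ), (0:ℝ))}).toReal)) := by
      have := MeasureTheory.tendsto_measure_iInter_atTop (μ := νn)
        (fun n => (hBm n).nullMeasurableSet) hBanti ⟨0, measure_ne_top _ _⟩
      rw [hBint] at this
      exact (ENNReal.tendsto_toReal (measure_ne_top _ _)).comp this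
    have htend : Tendsto (fun n => μ (B n)) atTop (𝓝 (μ {((0:ℝ), (0:ℝ))})) := by
      have heq : (fun n => μ (B n)) = fun n => (νp (B n)).toReal - (νn (B n)).toReal :=
        funext fun n => hdecomp _ (hBm n)
      rw [heq, hdecomp _ hptm]
      exact htendp.sub htendn
    have htend0 : Tendsto (fun n => μ (B n)) atTop (𝓝 0) := by
      have heq : (fun n => μ (B n)) = fun n : ℕ => ∫ ω, (X 0 ω - X (-(1 / (n + 1 : ℝ))) ω) ^ 2 := by
        funext n
        exact hsq (-(1 / (n + 1 : ℝ))) 0 (neg_nonpos.mpr (by positivity))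
      rw [heq]
      have hcomp : Tendsto (fun n : ℕ => -(1 / (n + 1 : ℝ))) atTop (𝓝 0) := by
        have := (tendsto_one_div_add_atTop_nhds_zero_nat (𝕜 := ℝ)).neg
        rwa [neg_zero] at this
      have := (hL2cont 0).comp hcomp
      refine this.congr fun n => ?_
      exact integral_congr_ae (Filter.Eventually.of_forall fun ω => by ring)
    exact tendsto_nhds_unique htend htend0
  -- the diagonal sets
  set D1 : Set (ℝ × ℝ) := {p | p.1 = p.2 ∧ p.1 ∈ Ioc 0 t} with hD1
  set D2 : Set (ℝ × ℝ) := {p | p.1 = p.2 ∧ p.1 ∈ Icc 0 t} with hD2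
  have hD1m : MeasurableSet D1 := by
    have : D1 = {p : ℝ × ℝ | p.1 = p.2} ∩ (Prod.fst ⁻¹' Ioc 0 t) := by ext p; simp [hD1]
    rw [this]
    exact (measurableSet_eq_fun measurable_fst measurable_snd).inter
      (measurable_fst measurableSet_Ioc)
  have hD2m : MeasurableSet D2 := by
    have : D2 = {p : ℝ × ℝ | p.1 = p.2} ∩ (Prod.fst ⁻¹' Icc 0 t) := by ext p; simp [hD2]
    rw [this]
    exact (measurableSet_eq_fun measurable_fst measurable_snd).inter
      (measurable_fst measurableSet_Icc)
  have hunion : D2 = D1 ∪ {((0:ℝ), (0:ℝ))} := by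
    ext ⟨x, y⟩
    simp only [hD1, hD2, mem_union, mem_setOf_eq, mem_Ioc, mem_Icc, mem_singleton_iff,
      Prod.mk.injEq]
    constructor
    · rintro ⟨rfl, h0, hxt⟩
      rcases eq_or_lt_of_le h0 with h | h
      · exact Or.inr ⟨h.symm, h.symm⟩
      · exact Or.inl ⟨rfl, h, hxt⟩
    · rintro (⟨rfl, h0, hxt⟩ | ⟨rfl, rfl⟩)
      · exact ⟨rfl, le_of_lt h0, hxt⟩
      · exact ⟨rfl, le_rfl, ht0⟩
  have hdisj : Disjoint D1 ({((0:ℝ), (0:ℝ))} : Set (ℝ × ℝ)) := by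
    rw [Set.disjoint_singleton_right]
    simp [hD1]
  have hval : μ D2 = μ D1 := by
    rw [hdecomp _ hD2m, hdecomp _ hD1m, hunion,
      measure_union hdisj (measurableSet_singleton _),
      measure_union hdisj (measurableSet_singleton _),
      ENNReal.toReal_add (measure_ne_top _ _) (measure_ne_top _ _),
      ENNReal.toReal_add (measure_ne_top _ _) (measure_ne_top _ _)]
    have := hpt
    rw [hdecomp _ (measurableSet_singleton _)] at this
    linarith
  -- main convergence
  have hmain := (key_tendsto νp t).sub (key_tendsto νn t)
  rw [show (νp D1).toReal - (νn D1).toReal = μ D2 by rw [hval, hdecomp _ hD1m]] at hmain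
  refine hmain.congr' ?_
  filter_upwards [self_mem_nhdsWithin] with ε (hε : 0 < ε)
  have hinner : ∀ s : ℝ, ∫ ω, (X (s + ε) ω - X s ω) ^ 2
      = (νp (Ioc s (s + ε) ×ˢ Ioc s (s + ε))).toReal
        - (νn (Ioc s (s + ε) ×ˢ Ioc s (s + ε))).toReal := by
    intro s
    rw [← hdecomp _ (measurableSet_Ioc.prod measurableSet_Ioc),
      hsq s (s + ε) (by linarith)]
  calc ((1 / ε) * ∫ s in Ioc (0:ℝ) t, (νp (Ioc s (s + ε) ×ˢ Ioc s (s + ε))).toReal)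
        - (1 / ε) * ∫ s in Ioc (0:ℝ) t, (νn (Ioc s (s + ε) ×ˢ Ioc s (s + ε))).toReal
      = (1 / ε) * ∫ s in Ioc (0:ℝ) t,
          ((νp (Ioc s (s + ε) ×ˢ Ioc s (s + ε))).toReal
            - (νn (Ioc s (s + ε) ×ˢ Ioc s (s + ε))).toReal) := by
        rw [integral_sub (integrable_nu_Q νp t ε) (integrable_nu_Q νn t ε), mul_sub]
    _ = (1 / ε) * ∫ s in Ioc (0:ℝ) t, ∫ ω, (X (s + ε) ω - X s ω) ^ 2 := by
        congr 1
        exact integral_congr_ae (Filter.Eventually.of_forall fun s => (hinner s).symm)
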